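/- Let A be a unital alternative *-algebra over ℂ containing a nontrivial symmetric idempotent e satisfying conditions (♠) and (♣), and let Φ : A → A be a map satisfying the *-Jordan n-derivation identity in the last two slots. Then Φ(e₁)* = Φ(e₁) and Φ(e₂)* = Φ(e₂), where e₁ = e and e₂ = 1 − e. -/

import Mathlib

/-- The Jordan `•`-product `a • b = ab + b a*`. -/
def starJordan {A : Type*} [NonAssocRing A] [StarRing A] (a b : A) : A :=
  a * b + b * star a

/-- Left-normed iterated Jordan `•`-product of a list (empty list ↦ 0, junk value). -/
def leftStarJordan {A : Type*} [NonAssocRing A] [StarRing A] : List A → A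
  | [] => 0
  | x :: xs => xs.foldl starJordan x

/-- The family `a₁ = ⋯ = a_{n-2} = 1`, `a_{n-1} = x`, `a_n = y`. -/
def lastTwoFamily {A : Type*} [One A] (n : ℕ) (x y : A) : Fin n → A :=
  fun i => if (i : ℕ) = n - 2 then x else if (i : ℕ) = n - 1 then y else 1

/-- `e₁ = e`, `e₂ = 1 - e`. -/
def peirceIdem {A : Type*} [NonAssocRing A] (e : A) : Fin 2 → A :=
  fun i => if i = 0 then e else 1 - e

/-- Membership in the Peirce component `A_{ij}`: `eᵢ x = x` and `x eⱼ = x`. -/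
def inPeirce {A : Type*} [NonAssocRing A] (e : A) (i j : Fin 2) (x : A) : Prop :=
  peirceIdem e i * x = x ∧ x * peirceIdem e j = x

/-- The inner derivation `Ξ_{y,z}(a) = y(za) − z(ya) + y(az) − (ya)z + (az)y − (ay)z`. -/
def innerDer {A : Type*} [NonAssocRing A] (y z a : A) : A :=
  y * (z * a) - z * (y * a) + y * (a * z) - (y * a) * z + (a * z) * y - (a * y) * z

set_option linter.unusedSectionVars false
set_option maxHeartbeats 1000000

section AuxRing
variable {A : Type*} [NonAssocRing A]

lemma aux_LL (halt₁ : ∀ a b : A, a * a * b = a * (a * b)) (a c b : A) :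
    (a * c + c * a) * b = a * (c * b) + c * (a * b) := by
  have key : (a * c + c * a) * b - (a * (c * b) + c * (a * b))
      = (a + c) * (a + c) * b - (a + c) * ((a + c) * b) := by
    simp only [mul_add, add_mul, halt₁ a b, halt₁ c b]
    abel
  rw [halt₁ (a + c) b, sub_self] at key
  exact sub_eq_zero.mp key

lemma aux_RL (halt₂ : ∀ a b : A, b * a * a = b * (a * a)) (b a c : A) :
    b * (a * c + c * a) = b * a * c + b * c * a := by
  have key : (b * a * c + b * c * a) - b * (a * c + c * a)
      = b * (a + c) * (a + c) - b * ((a + c) * (a + c)) := by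
    simp only [mul_add, add_mul, halt₂ a b, halt₂ c b]
    abel
  rw [halt₂ (a + c) b, sub_self] at key
  exact (sub_eq_zero.mp key).symm

lemma aux_flex (halt₁ : ∀ a b : A, a * a * b = a * (a * b))
    (halt₂ : ∀ a b : A, b * a * a = b * (a * a)) (x y : A) :
    x * (y * x) = x * y * x := by
  have h := aux_RL halt₂ x y x
  have h1 : x * (x * y) = x * x * y := (halt₁ x y).symm
  have key : x * (y * x) - x * y * x
      = x * (y * x + x * y) - (x * y * x + x * x * y) := by
    rw [mul_add, h1]; abel
  rw [h, sub_self] at key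
  exact sub_eq_zero.mp key

section Peirce
variable [Module ℂ A]

lemma aux_tt {x : A} (h : x + x = 0) : x = 0 := by
  have h2 : (2 : ℂ) • x = 0 := by rw [two_smul]; exact h
  have := congrArg (fun z => ((2 : ℂ)⁻¹) • z) h2
  simpa [smul_smul, inv_mul_cancel₀ (two_ne_zero (α := ℂ))] using this

lemma aux_selfadd {x : A} (h : x + x = x) : x = 0 := by
  have h' : x + x = 0 + x := by rw [zero_add]; exact h
  exact add_right_cancel h'

variable (e : A)

def aux_is11 (x : A) : Prop := e * x = x ∧ x * e = x
def aux_is12 (x : A) : Prop := e * x = x ∧ x * e = 0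
def aux_is21 (x : A) : Prop := e * x = 0 ∧ x * e = x
def aux_is22 (x : A) : Prop := e * x = 0 ∧ x * e = 0

variable {e}
variable (halt₁ : ∀ a b : A, a * a * b = a * (a * b))
  (halt₂ : ∀ a b : A, b * a * a = b * (a * a)) (he : e * e = e)

include halt₁ he in
lemma aux_P1 (z : A) : e * (e * z) = e * z := by rw [← halt₁, he]

include halt₂ he in
lemma aux_P2 (z : A) : z * e * e = z * e := by rw [halt₂, he]

include halt₁ halt₂ in
lemma aux_T11_12 {x b : A} (hx : aux_is11 e x) (hb : aux_is12 e b) :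
    aux_is12 e (x * b) := by
  obtain ⟨hx1, hx2⟩ := hx; obtain ⟨hb1, hb2⟩ := hb
  constructor
  · have h := aux_LL halt₁ e x b
    rw [hx1, hx2, hb1, add_mul] at h
    exact (add_right_cancel h).symm
  · have h := aux_RL halt₂ x b e
    rw [hb2, hb1, zero_add, hx2] at h
    have h' : x * b * e + x * b = 0 + x * b := by rw [zero_add]; exact h.symm
    exact add_right_cancel h'

include halt₁ halt₂ he in
lemma aux_T12_11 {b x : A} (hb : aux_is12 e b) (hx : aux_is11 e x) :
    b * x = 0 := by
  obtain ⟨hb1, hb2⟩ := hb; obtain ⟨hx1, hx2⟩ := hx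
  have h2 := aux_RL halt₂ b x e
  rw [hx2, hx1, hb2, zero_mul, add_zero, mul_add] at h2
  have h4 := congrArg (fun w => w * e) h2
  simp only [add_mul] at h4
  rw [aux_P2 halt₂ he (b * x)] at h4
  have h5 : b * x * e = 0 := aux_selfadd h4
  rw [h5] at h2
  exact aux_tt h2

include halt₁ halt₂ in
lemma aux_T12_12 {b b' : A} (hb : aux_is12 e b) (hb' : aux_is12 e b') :
    aux_is21 e (b * b') := by
  obtain ⟨hb1, hb2⟩ := hb; obtain ⟨hb1', hb2'⟩ := hb'
  constructor
  · have h := aux_LL halt₁ e b b'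
    rw [hb1, hb2, add_zero, hb1'] at h
    have h' : e * (b * b') + b * b' = 0 + b * b' := by rw [zero_add]; exact h.symm
    exact add_right_cancel h'
  · have h := aux_RL halt₂ b b' e
    rw [hb2', hb1', zero_add, hb2, zero_mul, add_zero] at h
    exact h.symm

include halt₁ halt₂ in
lemma aux_T12_21 {b a : A} (hb : aux_is12 e b) (ha : aux_is21 e a) :
    aux_is11 e (b * a) := by
  obtain ⟨hb1, hb2⟩ := hb; obtain ⟨ha1, ha2⟩ := ha
  constructor
  · have h := aux_LL halt₁ e b a
    rw [hb1, hb2, add_zero, ha1, mul_zero, add_zero] at h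
    exact h.symm
  · have h := aux_RL halt₂ b a e
    rw [ha2, ha1, add_zero, hb2, zero_mul, add_zero] at h
    exact h.symm

include halt₁ halt₂ in
lemma aux_T12_22 {b y : A} (hb : aux_is12 e b) (hy : aux_is22 e y) :
    aux_is12 e (b * y) := by
  obtain ⟨hb1, hb2⟩ := hb; obtain ⟨hy1, hy2⟩ := hy
  constructor
  · have h := aux_LL halt₁ e b y
    rw [hb1, hb2, add_zero, hy1, mul_zero, add_zero] at h
    exact h.symm
  · have h := aux_RL halt₂ b y e
    rw [hy2, hy1, add_zero, mul_zero, hb2, zero_mul, add_zero] at h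
    exact h.symm

include halt₁ halt₂ in
lemma aux_T21_12 {a b : A} (ha : aux_is21 e a) (hb : aux_is12 e b) :
    aux_is22 e (a * b) := by
  obtain ⟨ha1, ha2⟩ := ha; obtain ⟨hb1, hb2⟩ := hb
  constructor
  · have h := aux_LL halt₁ e a b
    rw [ha1, ha2, zero_add, hb1] at h
    have h' : e * (a * b) + a * b = 0 + a * b := by rw [zero_add]; exact h.symm
    exact add_right_cancel h'
  · have h := aux_RL halt₂ a b e
    rw [hb2, hb1, zero_add, ha2] at h
    have h' : a * b * e + a * b = 0 + a * b := by rw [zero_add]; exact h.symm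
    exact add_right_cancel h'

include halt₁ halt₂ he in
lemma aux_T11_right0 {x w : A} (hx : aux_is11 e x) (hw : e * w = 0) :
    x * w = 0 := by
  obtain ⟨hx1, hx2⟩ := hx
  have h := aux_LL halt₁ e x w
  rw [hx1, hx2, hw, mul_zero, add_zero, add_mul] at h
  have h4 := congrArg (fun w' => e * w') h
  simp only [mul_add] at h4
  rw [aux_P1 halt₁ he (x * w)] at h4
  have h5 : e * (x * w) = 0 := aux_selfadd h4
  rw [h5] at h
  exact aux_tt h

include halt₁ halt₂ in
lemma aux_T11_11 {x x' : A} (hx : aux_is11 e x) (hx' : aux_is11 e x') :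
    aux_is11 e (x * x') := by
  obtain ⟨hx1, hx2⟩ := hx; obtain ⟨hx1', hx2'⟩ := hx'
  constructor
  · have h := aux_LL halt₁ e x x'
    rw [hx1, hx2, hx1', add_mul] at h
    exact (add_right_cancel h).symm
  · have h := aux_RL halt₂ x x' e
    rw [hx2', hx1', mul_add, hx2] at h
    exact (add_right_cancel h).symm


-- projections
variable (e) in
def aux_p11 (z : A) : A := e * z * e
variable (e) in
def aux_p12 (z : A) : A := e * z - e * z * e
variable (e) in
def aux_p21 (z : A) : A := z * e - e * z * e
variable (e) in
def aux_p22 (z : A) : A := z - e * z - z * e + e * z * e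

lemma aux_decomp (z : A) : aux_p11 e z + aux_p12 e z + aux_p21 e z + aux_p22 e z = z := by
  unfold aux_p11 aux_p12 aux_p21 aux_p22; abel

include halt₁ halt₂ he in
lemma aux_m11 (z : A) : aux_is11 e (aux_p11 e z) := by
  unfold aux_p11
  constructor
  · rw [aux_flex halt₁ halt₂ e (e * z), aux_P1 halt₁ he z]
  · rw [aux_P2 halt₂ he (e * z)]

include halt₁ halt₂ he in
lemma aux_m12 (z : A) : aux_is12 e (aux_p12 e z) := by
  unfold aux_p12
  constructor
  · rw [mul_sub, aux_P1 halt₁ he z, aux_flex halt₁ halt₂ e (e * z), aux_P1 halt₁ he z]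
  · rw [sub_mul, aux_P2 halt₂ he (e * z), sub_self]

include halt₁ halt₂ he in
lemma aux_m21 (z : A) : aux_is21 e (aux_p21 e z) := by
  unfold aux_p21
  constructor
  · rw [mul_sub, aux_flex halt₁ halt₂ e z, aux_flex halt₁ halt₂ e (e * z),
      aux_P1 halt₁ he z, sub_self]
  · rw [sub_mul, aux_P2 halt₂ he z, aux_P2 halt₂ he (e * z)]

include halt₁ halt₂ he in
lemma aux_m22 (z : A) : aux_is22 e (aux_p22 e z) := by
  unfold aux_p22
  constructor
  · rw [mul_add, mul_sub, mul_sub, aux_P1 halt₁ he z, aux_flex halt₁ halt₂ e z,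
      aux_flex halt₁ halt₂ e (e * z), aux_P1 halt₁ he z]
    abel
  · rw [add_mul, sub_mul, sub_mul, aux_P2 halt₂ he z, aux_P2 halt₂ he (e * z)]
    abel

lemma aux_p12_of11 {u : A} (hu : aux_is11 e u) : aux_p12 e u = 0 := by
  obtain ⟨h1, h2⟩ := hu; unfold aux_p12; rw [h1, h2, sub_self]
lemma aux_p12_of12 {u : A} (hu : aux_is12 e u) : aux_p12 e u = u := by
  obtain ⟨h1, h2⟩ := hu; unfold aux_p12; rw [h1, h2, sub_zero]
lemma aux_p12_of21 {u : A} (hu : aux_is21 e u) : aux_p12 e u = 0 := by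
  obtain ⟨h1, h2⟩ := hu; unfold aux_p12; rw [h1, zero_mul, sub_zero]
lemma aux_p12_of22 {u : A} (hu : aux_is22 e u) : aux_p12 e u = 0 := by
  obtain ⟨h1, h2⟩ := hu; unfold aux_p12; rw [h1, zero_mul, sub_zero]
lemma aux_p21_of21 {u : A} (hu : aux_is21 e u) : aux_p21 e u = u := by
  obtain ⟨h1, h2⟩ := hu; unfold aux_p21; rw [h1, h2, zero_mul, sub_zero]
lemma aux_p22_of22 {u : A} (hu : aux_is22 e u) : aux_p22 e u = u := by
  obtain ⟨h1, h2⟩ := hu; unfold aux_p22; rw [h1, h2, zero_mul]; abel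

include halt₁ he in
lemma aux_p22_el (z : A) : aux_p22 e (e * z) = 0 := by
  unfold aux_p22
  rw [aux_P1 halt₁ he z]
  abel

include halt₁ halt₂ he in
lemma aux_p22_er (z : A) : aux_p22 e (z * e) = 0 := by
  unfold aux_p22
  rw [aux_flex halt₁ halt₂ e z, aux_P2 halt₂ he z, aux_P2 halt₂ he (e * z)]
  abel

include halt₁ he in
lemma aux_p12_el (z : A) : aux_p12 e (e * z) = aux_p12 e z := by
  unfold aux_p12
  rw [aux_P1 halt₁ he z]

include halt₁ halt₂ he in
lemma aux_p12_er (z : A) : aux_p12 e (z * e) = 0 := by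
  unfold aux_p12
  rw [aux_flex halt₁ halt₂ e z, aux_P2 halt₂ he (e * z), sub_self]

lemma aux_p12_add (u v : A) : aux_p12 e (u + v) = aux_p12 e u + aux_p12 e v := by
  unfold aux_p12; rw [mul_add, add_mul]; abel
lemma aux_p22_add (u v : A) : aux_p22 e (u + v) = aux_p22 e u + aux_p22 e v := by
  unfold aux_p22; simp only [mul_add, add_mul]; abel
lemma aux_p22_neg (u : A) : aux_p22 e (-u) = -aux_p22 e u := by
  unfold aux_p22; simp only [mul_neg, neg_mul]; abel

section SmulStar
variable [SMulCommClass ℂ A A] [IsScalarTower ℂ A A]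

lemma aux_p22_smul (q : ℂ) (z : A) : aux_p22 e (q • z) = q • aux_p22 e z := by
  unfold aux_p22
  rw [mul_smul_comm, smul_mul_assoc, smul_mul_assoc]
  simp only [smul_sub, smul_add]

end SmulStar

section StarPart
variable [StarRing A] (hestar : star e = e)

include hestar in
lemma aux_star11 {x : A} (hx : aux_is11 e x) : aux_is11 e (star x) := by
  obtain ⟨h1, h2⟩ := hx
  constructor
  · have : e * star x = star (x * e) := by rw [star_mul, hestar]
    rw [this, h2]
  · have : star x * e = star (e * x) := by rw [star_mul, hestar]
    rw [this, h1]

include hestar in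
lemma aux_star12 {x : A} (hx : aux_is12 e x) : aux_is21 e (star x) := by
  obtain ⟨h1, h2⟩ := hx
  constructor
  · have : e * star x = star (x * e) := by rw [star_mul, hestar]
    rw [this, h2, star_zero]
  · have : star x * e = star (e * x) := by rw [star_mul, hestar]
    rw [this, h1]

include hestar in
lemma aux_star21 {x : A} (hx : aux_is21 e x) : aux_is12 e (star x) := by
  obtain ⟨h1, h2⟩ := hx
  constructor
  · have : e * star x = star (x * e) := by rw [star_mul, hestar]
    rw [this, h2]
  · have : star x * e = star (e * x) := by rw [star_mul, hestar]
    rw [this, h1, star_zero]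

include halt₁ halt₂ hestar in
lemma aux_p11_star (z : A) : star (aux_p11 e z) = aux_p11 e (star z) := by
  unfold aux_p11
  rw [star_mul, star_mul, hestar, aux_flex halt₁ halt₂ e (star z)]

end StarPart

include halt₁ halt₂ he in
lemma aux_corner {x : A} (h : e * x + x * e = 0) : e * x = 0 ∧ x * e = 0 := by
  have hx : e * x = -(x * e) := eq_neg_of_add_eq_zero_left h
  have h3 : e * x = -(e * x * e) := by
    calc e * x = e * (e * x) := (aux_P1 halt₁ he x).symm
      _ = e * (-(x * e)) := by rw [hx]
      _ = -(e * (x * e)) := by rw [mul_neg]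
      _ = -(e * x * e) := by rw [aux_flex halt₁ halt₂ e x]
  have h4 := congrArg (fun w => w * e) h3
  simp only [neg_mul] at h4
  rw [aux_P2 halt₂ he (e * x)] at h4
  -- h4 : (e*x)*e = -((e*x)*e)
  have h5 : e * x * e = 0 := by
    have h6 : e * x * e + e * x * e = 0 := by nth_rewrite 2 [h4]; rw [add_neg_cancel]
    exact aux_tt h6
  have h7 : e * x = 0 := by rw [h3, h5, neg_zero]
  refine ⟨h7, ?_⟩
  have := h
  rw [h7, zero_add] at this
  exact this

end Peirce
end AuxRing

section Fold
variable {A : Type*} [NonAssocRing A] [StarRing A]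

lemma aux_sj_add_left (u v y : A) : starJordan (u + v) y = starJordan u y + starJordan v y := by
  unfold starJordan
  rw [star_add, add_mul, mul_add]
  abel

lemma aux_sj_zero_left (y : A) : starJordan 0 y = 0 := by
  unfold starJordan; rw [star_zero, zero_mul, mul_zero, add_zero]

lemma aux_nsmul_one_mul (q : ℕ) (u : A) : (q • (1 : A)) * u = q • u := by
  induction q with
  | zero => simp
  | succ q ih => rw [succ_nsmul, add_mul, ih, one_mul, succ_nsmul]

lemma aux_mul_nsmul_one (q : ℕ) (u : A) : u * (q • (1 : A)) = q • u := by
  induction q with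
  | zero => simp
  | succ q ih => rw [succ_nsmul, mul_add, ih, mul_one, succ_nsmul]

lemma aux_nsmul_mul (q : ℕ) (u y : A) : (q • u) * y = q • (u * y) := by
  induction q with
  | zero => simp
  | succ q ih => rw [succ_nsmul, add_mul, ih, succ_nsmul]

lemma aux_mul_nsmul (q : ℕ) (u y : A) : y * (q • u) = q • (y * u) := by
  induction q with
  | zero => simp
  | succ q ih => rw [succ_nsmul, mul_add, ih, succ_nsmul]

lemma aux_sj_nsmul_left (q : ℕ) (u y : A) :
    starJordan (q • u) y = q • starJordan u y := by
  unfold starJordan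
  rw [star_nsmul, aux_nsmul_mul, aux_mul_nsmul, nsmul_add]

lemma aux_sj_one (q : ℕ) : starJordan (q • (1 : A)) 1 = (2 * q) • (1 : A) := by
  unfold starJordan
  rw [star_nsmul, star_one, mul_one, one_mul, two_mul, add_nsmul]

lemma aux_fold_ones (k q : ℕ) :
    List.foldl starJordan (q • (1 : A)) (List.replicate k 1) = (2 ^ k * q) • (1 : A) := by
  induction k generalizing q with
  | zero => rw [List.replicate_zero, List.foldl_nil, pow_zero, one_mul]
  | succ k ih =>
    rw [List.replicate_succ, List.foldl_cons, aux_sj_one, ih]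
    congr 1
    ring

lemma aux_fold_main (p : ℕ) (u y : A) :
    leftStarJordan (List.replicate p (1 : A) ++ [u, y]) = (2 ^ p) • starJordan u y := by
  cases p with
  | zero =>
    show List.foldl starJordan u [y] = (2 ^ 0) • starJordan u y
    rw [List.foldl_cons, List.foldl_nil, pow_zero, one_nsmul]
  | succ p =>
    rw [List.replicate_succ, List.cons_append]
    show List.foldl starJordan 1 (List.replicate p 1 ++ [u, y]) = _
    rw [List.foldl_append]
    have h0 : List.foldl starJordan (1 : A) (List.replicate p 1) = (2 ^ p) • (1 : A) := by
      have h1 := aux_fold_ones (A := A) p 1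
      rw [one_nsmul, mul_one] at h1
      exact h1
    rw [h0]
    show starJordan (starJordan ((2 ^ p) • (1 : A)) u) y = _
    have h2 : starJordan ((2 ^ p) • (1 : A)) u = (2 ^ (p + 1)) • u := by
      unfold starJordan
      rw [star_nsmul, star_one, aux_nsmul_one_mul, aux_mul_nsmul_one, ← add_nsmul]
      congr 1
      ring
    rw [h2, aux_sj_nsmul_left]

lemma aux_lsj_append (l₁ l₂ : List A) (h : l₁ ≠ []) :
    leftStarJordan (l₁ ++ l₂) = List.foldl starJordan (leftStarJordan l₁) l₂ := by
  cases l₁ with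
  | nil => exact absurd rfl h
  | cons a t =>
    show List.foldl starJordan a (t ++ l₂) = List.foldl starJordan (List.foldl starJordan a t) l₂
    rw [List.foldl_append]

lemma aux_term_lt (p : ℕ) (x y v : A) (k : ℕ) :
    leftStarJordan (List.replicate k (1 : A) ++ v :: (List.replicate (p - 1 - k) (1 : A) ++ [x, y]))
      = starJordan (starJordan (List.foldl starJordan
          (leftStarJordan (List.replicate k (1 : A) ++ [v]))
          (List.replicate (p - 1 - k) (1 : A))) x) y := by
  have hsplit : List.replicate k (1 : A) ++ v :: (List.replicate (p - 1 - k) (1 : A) ++ [x, y])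
      = (List.replicate k (1 : A) ++ [v]) ++ (List.replicate (p - 1 - k) (1 : A) ++ [x, y]) := by
    rw [List.append_assoc, List.singleton_append]
  rw [hsplit, aux_lsj_append _ _ (by simp), List.foldl_append]
  rfl

end Fold

section Shapes
variable {A : Type*} [One A]

lemma aux_ofFn_eq_list (p : ℕ) (g : Fin (p + 2) → A) (L : List A)
    (hlen : L.length = p + 2)
    (hval : ∀ (i : ℕ) (h : i < p + 2), g ⟨i, h⟩ = L[i]'(by omega)) :
    List.ofFn g = L := by
  apply List.ext_getElem
  · rw [List.length_ofFn, hlen]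
  · intro i h1 h2
    rw [List.getElem_ofFn]
    exact hval i (by simp at h1; omega)

lemma aux_ofFn_fam (p : ℕ) (x y : A) :
    List.ofFn (lastTwoFamily (p + 2) x y) = List.replicate p (1 : A) ++ [x, y] := by
  refine aux_ofFn_eq_list p _ _ ?_ ?_
  · rw [List.length_append, List.length_replicate]
    rfl
  · intro i h
    unfold lastTwoFamily
    have h2 : p + 2 - 2 = p := by omega
    have h3 : p + 2 - 1 = p + 1 := by omega
    simp only [h2, h3]
    rcases Nat.lt_trichotomy i p with hip | hip | hip
    · have : ¬ (i = p) := by omega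
      have h4 : ¬ (i = p + 1) := by omega
      simp only [this, h4, if_false]
      rw [List.getElem_append_left (by simpa using hip), List.getElem_replicate]
    · subst hip
      simp only [if_pos rfl]
      rw [List.getElem_append_right (by simp)]
      simp
    · have h5 : i = p + 1 := by omega
      subst h5
      have : ¬ (p + 1 = p) := by omega
      simp only [this, if_false, if_pos rfl]
      rw [List.getElem_append_right (by simp)]
      simp
end Shapes

section Shapes2
variable {A : Type*} [One A]

lemma aux_ofFn_upd_lt (p : ℕ) (x y v : A) (k : Fin (p + 2)) (hk : (k : ℕ) < p) :
    List.ofFn (Function.update (lastTwoFamily (p + 2) x y) k v)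
      = List.replicate (k : ℕ) (1 : A)
        ++ v :: (List.replicate (p - 1 - (k : ℕ)) (1 : A) ++ [x, y]) := by
  classical
  refine aux_ofFn_eq_list p _ _ ?_ ?_
  · simp only [List.length_append, List.length_replicate, List.length_cons,
      List.length_nil]
    omega
  · intro i h
    rw [Function.update_apply]
    unfold lastTwoFamily
    have h2 : p + 2 - 2 = p := by omega
    have h3 : p + 2 - 1 = p + 1 := by omega
    simp only [h2, h3, Fin.ext_iff]
    simp only [List.getElem_append, List.getElem_cons, List.getElem_replicate,
      List.length_replicate, List.length_cons, List.length_append, List.length_nil]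
    split_ifs <;> first | rfl | omega

lemma aux_ofFn_upd_p (p : ℕ) (x y v : A) (k : Fin (p + 2)) (hk : (k : ℕ) = p) :
    List.ofFn (Function.update (lastTwoFamily (p + 2) x y) k v)
      = List.replicate p (1 : A) ++ [v, y] := by
  classical
  refine aux_ofFn_eq_list p _ _ ?_ ?_
  · simp only [List.length_append, List.length_replicate, List.length_cons,
      List.length_nil]
  · intro i h
    rw [Function.update_apply]
    unfold lastTwoFamily
    have h2 : p + 2 - 2 = p := by omega
    have h3 : p + 2 - 1 = p + 1 := by omega
    simp only [h2, h3, Fin.ext_iff]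
    simp only [List.getElem_append, List.getElem_cons, List.getElem_replicate,
      List.length_replicate, List.length_cons, List.length_append, List.length_nil]
    split_ifs <;> first | rfl | omega

lemma aux_ofFn_upd_p1 (p : ℕ) (x y v : A) (k : Fin (p + 2)) (hk : (k : ℕ) = p + 1) :
    List.ofFn (Function.update (lastTwoFamily (p + 2) x y) k v)
      = List.replicate p (1 : A) ++ [x, v] := by
  classical
  refine aux_ofFn_eq_list p _ _ ?_ ?_
  · simp only [List.length_append, List.length_replicate, List.length_cons,
      List.length_nil]
  · intro i h
    rw [Function.update_apply]
    unfold lastTwoFamily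
    have h2 : p + 2 - 2 = p := by omega
    have h3 : p + 2 - 1 = p + 1 := by omega
    simp only [h2, h3, Fin.ext_iff]
    simp only [List.getElem_append, List.getElem_cons, List.getElem_replicate,
      List.length_replicate, List.length_cons, List.length_append, List.length_nil]
    split_ifs <;> first | rfl | omega

lemma aux_fam_lt (p : ℕ) (x y : A) (k : Fin (p + 2)) (hk : (k : ℕ) < p) :
    lastTwoFamily (p + 2) x y k = 1 := by
  unfold lastTwoFamily
  split_ifs <;> first | rfl | (exfalso; omega)

lemma aux_fam_p (p : ℕ) (x y : A) (k : Fin (p + 2)) (hk : (k : ℕ) = p) :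
    lastTwoFamily (p + 2) x y k = x := by
  unfold lastTwoFamily
  split_ifs <;> first | rfl | (exfalso; omega)

lemma aux_fam_p1 (p : ℕ) (x y : A) (k : Fin (p + 2)) (hk : (k : ℕ) = p + 1) :
    lastTwoFamily (p + 2) x y k = y := by
  unfold lastTwoFamily
  split_ifs <;> first | rfl | (exfalso; omega)

end Shapes2

section HID
variable {A : Type*} [NonAssocRing A] [StarRing A]

lemma aux_sj_sum {ι : Type*} (s : Finset ι) (w : ι → A) (x y : A) :
    ∑ i ∈ s, starJordan (starJordan (w i) x) y
      = starJordan (starJordan (∑ i ∈ s, w i) x) y := by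
  classical
  induction s using Finset.induction_on with
  | empty => simp [aux_sj_zero_left]
  | insert _ _ ha ih =>
    rw [Finset.sum_insert ha, Finset.sum_insert ha, aux_sj_add_left, aux_sj_add_left, ih]

lemma aux_hID (p : ℕ) (Φ : A → A)
    (hΦ : ∀ x y : A,
      Φ (leftStarJordan (List.ofFn (lastTwoFamily (p + 2) x y))) =
        ∑ k : Fin (p + 2), leftStarJordan (List.ofFn
          (Function.update (lastTwoFamily (p + 2) x y) k
            (Φ (lastTwoFamily (p + 2) x y k))))) :
    ∃ c : A, ∀ x y : A, Φ ((2 ^ p) • starJordan x y)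
      = starJordan (starJordan c x) y + (2 ^ p) • starJordan (Φ x) y
        + (2 ^ p) • starJordan x (Φ y) := by
  classical
  refine ⟨∑ i : Fin p, List.foldl starJordan
      (leftStarJordan (List.replicate (i : ℕ) (1 : A) ++ [Φ 1]))
      (List.replicate (p - 1 - (i : ℕ)) (1 : A)), ?_⟩
  intro x y
  have h := hΦ x y
  rw [aux_ofFn_fam, aux_fold_main] at h
  rw [Fin.sum_univ_castSucc] at h
  rw [Fin.sum_univ_castSucc] at h
  have hlastval : ((Fin.last (p + 1) : Fin (p + 2)) : ℕ) = p + 1 := by simp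
  have hsecval : (((Fin.last p).castSucc : Fin (p + 2)) : ℕ) = p := by simp
  have hlast : leftStarJordan (List.ofFn
      (Function.update (lastTwoFamily (p + 2) x y) (Fin.last (p + 1))
        (Φ (lastTwoFamily (p + 2) x y (Fin.last (p + 1))))))
      = (2 ^ p) • starJordan x (Φ y) := by
    rw [aux_fam_p1 p x y _ hlastval, aux_ofFn_upd_p1 p x y (Φ y) _ hlastval,
      aux_fold_main]
  have hsec : leftStarJordan (List.ofFn
      (Function.update (lastTwoFamily (p + 2) x y) ((Fin.last p).castSucc)
        (Φ (lastTwoFamily (p + 2) x y ((Fin.last p).castSucc)))))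
      = (2 ^ p) • starJordan (Φ x) y := by
    rw [aux_fam_p p x y _ hsecval, aux_ofFn_upd_p p x y (Φ x) _ hsecval,
      aux_fold_main]
  have hpt : ∀ i : Fin p, leftStarJordan (List.ofFn
      (Function.update (lastTwoFamily (p + 2) x y) (i.castSucc.castSucc)
        (Φ (lastTwoFamily (p + 2) x y (i.castSucc.castSucc)))))
      = starJordan (starJordan (List.foldl starJordan
          (leftStarJordan (List.replicate (i : ℕ) (1 : A) ++ [Φ 1]))
          (List.replicate (p - 1 - (i : ℕ)) (1 : A))) x) y := by
    intro i
    have hival : ((i.castSucc.castSucc : Fin (p + 2)) : ℕ) = (i : ℕ) := by simp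
    have hilt : ((i.castSucc.castSucc : Fin (p + 2)) : ℕ) < p := by
      rw [hival]; exact i.isLt
    rw [aux_fam_lt p x y _ hilt, aux_ofFn_upd_lt p x y (Φ 1) _ hilt, hival,
      aux_term_lt]
  rw [Finset.sum_congr rfl (fun i _ => hpt i), aux_sj_sum, hlast, hsec] at h
  exact h

end HID

section Main
variable {A : Type*} [NonAssocRing A] [Module ℂ A]
  [SMulCommClass ℂ A A] [IsScalarTower ℂ A A] [StarRing A]

lemma aux_abba {a b : A} (h : a + a = b + b) : a = b := by
  have h2 : (a - b) + (a - b) = (a + a) - (b + b) := by abel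
  rw [h, sub_self] at h2
  exact sub_eq_zero.mp (aux_tt h2)

lemma aux_p12_zero (e : A) : aux_p12 e 0 = 0 := by
  unfold aux_p12; rw [mul_zero, zero_mul, sub_zero]

lemma aux_p22_sub (e u v : A) : aux_p22 e (u - v) = aux_p22 e u - aux_p22 e v := by
  unfold aux_p22; simp only [mul_sub, sub_mul]; abel

lemma aux_sj_split {Z Z1 Z2 Z3 b : A} (h : Z = Z1 + Z2 + Z3) :
    starJordan Z b = Z1 * b + (Z2 * b + (Z3 * b
      + (b * star Z1 + (b * star Z2 + b * star Z3)))) := by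
  show Z * b + b * star Z = _
  rw [h, star_add, star_add, add_mul, add_mul, mul_add, mul_add]
  abel

lemma aux_p12_add6 (e t1 t2 t3 t4 t5 t6 : A) :
    aux_p12 e (t1 + (t2 + (t3 + (t4 + (t5 + t6)))))
      = aux_p12 e t1 + (aux_p12 e t2 + (aux_p12 e t3
        + (aux_p12 e t4 + (aux_p12 e t5 + aux_p12 e t6)))) := by
  unfold aux_p12; simp only [mul_add, add_mul]; abel

lemma aux_main
    (halt₁ : ∀ a b : A, a * a * b = a * (a * b))
    (halt₂ : ∀ a b : A, b * a * a = b * (a * a))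
    (e : A) (hestar : star e = e) (he : e * e = e)
    (hfaith : ∀ x : A, (∀ r : A, x * r * (1 - e) = 0) → x = 0)
    (Φ : A → A) (M : ℂ) (hM0 : M ≠ 0)
    (hstarM : ∀ z : A, star (M • z) = M • star z)
    (c : A)
    (hID : ∀ x y : A, Φ (M • starJordan x y) =
      starJordan (starJordan c x) y + M • starJordan (Φ x) y
        + M • starJordan x (Φ y)) :
    star (Φ e) = Φ e := by
  have sj_eq : ∀ x y : A, starJordan x y = x * y + y * star x := fun _ _ => rfl
  have hMinv : ∀ z : A, M • (M⁻¹ • z) = z := fun z => by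
    rw [smul_smul, mul_inv_cancel₀ hM0, one_smul]
  have hMinv' : ∀ z : A, M⁻¹ • (M • z) = z := fun z => by
    rw [smul_smul, inv_mul_cancel₀ hM0, one_smul]
  have hstarMinv : ∀ z : A, star (M⁻¹ • z) = M⁻¹ • star z := by
    intro z
    calc star (M⁻¹ • z) = M⁻¹ • (M • star (M⁻¹ • z)) := (hMinv' _).symm
      _ = M⁻¹ • star z := by rw [← hstarM, hMinv]
  have hsjsmul : ∀ t y : A, starJordan (M⁻¹ • t) y = M⁻¹ • starJordan t y := by
    intro t y
    show (M⁻¹ • t) * y + y * star (M⁻¹ • t) = M⁻¹ • (t * y + y * star t)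
    rw [hstarMinv, smul_mul_assoc, mul_smul_comm, smul_add]
  have hsj_addM : ∀ u v y : A,
      starJordan (u + M • v) y = starJordan u y + M • starJordan v y := by
    intro u v y
    show (u + M • v) * y + y * star (u + M • v)
        = (u * y + y * star u) + M • (v * y + y * star v)
    rw [star_add, hstarM, add_mul, mul_add, smul_mul_assoc, mul_smul_comm, smul_add]
    abel
  have hGM : ∀ t y : A, Φ (starJordan t y)
      = starJordan (starJordan c (M⁻¹ • t) + M • Φ (M⁻¹ • t)) y
        + starJordan t (Φ y) := by
    intro t y
    have h := hID (M⁻¹ • t) y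
    rw [hsjsmul t y, hMinv (starJordan t y), hsjsmul t (Φ y),
      hMinv (starJordan t (Φ y))] at h
    rw [hsj_addM]
    exact h
  -- basic facts about f = 1 - e
  obtain ⟨f, hfdef⟩ : ∃ f : A, f = 1 - e := ⟨_, rfl⟩
  rw [← hfdef] at hfaith
  have hfstar : star f = f := by rw [hfdef, star_sub, star_one, hestar]
  have hef : e * f = 0 := by rw [hfdef, mul_sub, mul_one, he, sub_self]
  have hfe : f * e = 0 := by rw [hfdef, sub_mul, one_mul, he, sub_self]
  have hff : f * f = f := by
    rw [hfdef, sub_mul, one_mul, mul_sub, mul_one, he, sub_self, sub_zero]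
  have hPhi0 : Φ 0 = 0 := by
    have h := hGM 0 0
    simp only [sj_eq, zero_mul, mul_zero, star_zero, add_zero, zero_add] at h
    exact h
  have hsym : ∀ z s : A, star s = s → star (starJordan z s) = starJordan z s := by
    intro z s hs
    simp only [sj_eq, star_add, star_mul, star_star, hs]
    abel
  have hx0star : star (M⁻¹ • e) = M⁻¹ • e := by rw [hstarMinv, hestar]
  -- ### Step A : f S + S f = 0, where S = Φ e - star (Φ e)
  have hsjfe : starJordan f e = 0 := by
    rw [sj_eq, hfstar, hfe, hef, add_zero]
  have eqA := hGM f e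
  rw [hsjfe, hPhi0] at eqA
  have eqAs := congrArg star eqA
  rw [star_zero, star_add, hsym _ e hestar] at eqAs
  have h4A : starJordan f (Φ e) = star (starJordan f (Φ e)) := by
    have h3 := eqA.symm.trans eqAs
    exact add_left_cancel h3
  have hfS : f * (Φ e - star (Φ e)) + (Φ e - star (Φ e)) * f = 0 := by
    have h5 : f * (Φ e - star (Φ e)) + (Φ e - star (Φ e)) * f
        = starJordan f (Φ e) - star (starJordan f (Φ e)) := by
      simp only [sj_eq, star_add, star_mul, star_star, hfstar, mul_sub, sub_mul]
      abel
    rw [h5, ← h4A, sub_self]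
  obtain ⟨hfS1, hfS2⟩ := aux_corner halt₁ halt₂ hff hfS
  have hLkill : ∀ w : A, f * w = 0 → e * w = w := by
    intro w h
    have h3 : f * w = w - e * w := by rw [hfdef, sub_mul, one_mul]
    have h2 : w - e * w = 0 := by rw [← h3, h]
    exact (sub_eq_zero.mp h2).symm
  have hRkill : ∀ w : A, w * f = 0 → w * e = w := by
    intro w h
    have h3 : w * f = w - w * e := by rw [hfdef, mul_sub, mul_one]
    have h2 : w - w * e = 0 := by rw [← h3, h]
    exact (sub_eq_zero.mp h2).symm
  have heS : e * (Φ e - star (Φ e)) = Φ e - star (Φ e) := hLkill _ hfS1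
  have hSe : (Φ e - star (Φ e)) * e = Φ e - star (Φ e) := hRkill _ hfS2
  -- ### Step B : facts about Φ (M⁻¹ • e)
  have hsjfx0 : starJordan f (M⁻¹ • e) = 0 := by
    simp only [sj_eq, hfstar, mul_smul_comm, smul_mul_assoc, hfe, hef, smul_zero,
      add_zero]
  have eqB := hGM f (M⁻¹ • e)
  rw [hsjfx0, hPhi0] at eqB
  have eqBs := congrArg star eqB
  rw [star_zero, star_add, hsym _ _ hx0star] at eqBs
  have h4B : starJordan f (Φ (M⁻¹ • e))
      = star (starJordan f (Φ (M⁻¹ • e))) := by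
    have h3 := eqB.symm.trans eqBs
    exact add_left_cancel h3
  have hfS' : f * (Φ (M⁻¹ • e) - star (Φ (M⁻¹ • e)))
      + (Φ (M⁻¹ • e) - star (Φ (M⁻¹ • e))) * f = 0 := by
    have h5 : f * (Φ (M⁻¹ • e) - star (Φ (M⁻¹ • e)))
        + (Φ (M⁻¹ • e) - star (Φ (M⁻¹ • e))) * f
        = starJordan f (Φ (M⁻¹ • e))
          - star (starJordan f (Φ (M⁻¹ • e))) := by
      simp only [sj_eq, star_add, star_mul, star_star, hfstar, mul_sub, sub_mul]
      abel
    rw [h5, ← h4B, sub_self]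
  obtain ⟨hfS1', hfS2'⟩ := aux_corner halt₁ halt₂ hff hfS'
  have heS' : e * (Φ (M⁻¹ • e) - star (Φ (M⁻¹ • e)))
      = Φ (M⁻¹ • e) - star (Φ (M⁻¹ • e)) := hLkill _ hfS1'
  have hS'e : (Φ (M⁻¹ • e) - star (Φ (M⁻¹ • e))) * e
      = Φ (M⁻¹ • e) - star (Φ (M⁻¹ • e)) := hRkill _ hfS2'
  -- ### p22 facts
  have hp22sj_e : ∀ z : A, aux_p22 e (starJordan z e) = 0 := by
    intro z
    rw [sj_eq, aux_p22_add, aux_p22_er halt₁ halt₂ he, aux_p22_el halt₁ he, add_zero]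
  have hp22sjx0 : ∀ z : A, aux_p22 e (starJordan z (M⁻¹ • e)) = 0 := by
    intro z
    have h1 : starJordan z (M⁻¹ • e) = M⁻¹ • starJordan z e := by
      rw [sj_eq, sj_eq, mul_smul_comm, smul_mul_assoc, smul_add]
    rw [h1, aux_p22_smul, hp22sj_e, smul_zero]
  have hfmul22 : ∀ w : A, aux_p22 e (f * w) = aux_p22 e w := by
    intro w
    have h1 : f * w = w - e * w := by rw [hfdef, sub_mul, one_mul]
    rw [h1, aux_p22_sub, aux_p22_el halt₁ he, sub_zero]
  have hmulf22 : ∀ w : A, aux_p22 e (w * f) = aux_p22 e w := by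
    intro w
    have h1 : w * f = w - w * e := by rw [hfdef, mul_sub, mul_one]
    rw [h1, aux_p22_sub, aux_p22_er halt₁ halt₂ he, sub_zero]
  have hp22Phix0 : aux_p22 e (Φ (M⁻¹ • e)) = 0 := by
    have h6 : starJordan f (Φ (M⁻¹ • e))
        = - starJordan (starJordan c (M⁻¹ • f)
            + M • Φ (M⁻¹ • f)) (M⁻¹ • e) :=
      eq_neg_of_add_eq_zero_right eqB.symm
    have h7 := congrArg (aux_p22 e) h6
    rw [sj_eq f (Φ (M⁻¹ • e)), hfstar, aux_p22_add, hfmul22, hmulf22,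
      aux_p22_neg, hp22sjx0, neg_zero] at h7
    exact aux_tt h7
  have hp22Z : aux_p22 e (starJordan c (M⁻¹ • e) + M • Φ (M⁻¹ • e)) = 0 := by
    rw [aux_p22_add, hp22sjx0, aux_p22_smul, hp22Phix0, smul_zero, add_zero]
  -- ### scaling : M • S' = S
  have hsje_x0 : starJordan e (M⁻¹ • e) = M⁻¹ • e + M⁻¹ • e := by
    rw [sj_eq, hestar, mul_smul_comm, smul_mul_assoc, he]
  have hsjx0_e : starJordan (M⁻¹ • e) e = M⁻¹ • e + M⁻¹ • e := by
    rw [sj_eq, hx0star, smul_mul_assoc, mul_smul_comm, he]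
  have equ3 := hGM e (M⁻¹ • e)
  have equ4 := hGM (M⁻¹ • e) e
  rw [hsje_x0] at equ3
  rw [hsjx0_e] at equ4
  have equ3s := congrArg star equ3
  rw [star_add, hsym _ _ hx0star] at equ3s
  have equ4s := congrArg star equ4
  rw [star_add, hsym _ e hestar] at equ4s
  have d3 : Φ (M⁻¹ • e + M⁻¹ • e) - star (Φ (M⁻¹ • e + M⁻¹ • e))
      = starJordan e (Φ (M⁻¹ • e)) - star (starJordan e (Φ (M⁻¹ • e))) := by
    rw [equ3s, equ3]; abel
  have d4 : Φ (M⁻¹ • e + M⁻¹ • e) - star (Φ (M⁻¹ • e + M⁻¹ • e))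
      = starJordan (M⁻¹ • e) (Φ e) - star (starJordan (M⁻¹ • e) (Φ e)) := by
    rw [equ4s, equ4]; abel
  have hL : starJordan e (Φ (M⁻¹ • e)) - star (starJordan e (Φ (M⁻¹ • e)))
      = e * (Φ (M⁻¹ • e) - star (Φ (M⁻¹ • e)))
        + (Φ (M⁻¹ • e) - star (Φ (M⁻¹ • e))) * e := by
    simp only [sj_eq, star_add, star_mul, star_star, hestar, mul_sub, sub_mul]
    abel
  have hR : starJordan (M⁻¹ • e) (Φ e) - star (starJordan (M⁻¹ • e) (Φ e))
      = (M⁻¹ • e) * (Φ e - star (Φ e)) + (Φ e - star (Φ e)) * (M⁻¹ • e) := by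
    simp only [sj_eq, star_add, star_mul, star_star, hx0star, mul_sub, sub_mul]
    abel
  have hscale : (Φ (M⁻¹ • e) - star (Φ (M⁻¹ • e)))
        + (Φ (M⁻¹ • e) - star (Φ (M⁻¹ • e)))
      = M⁻¹ • (Φ e - star (Φ e)) + M⁻¹ • (Φ e - star (Φ e)) := by
    have h9 := (d3.symm.trans d4)
    rw [hL, heS', hS'e, hR, smul_mul_assoc, heS, mul_smul_comm, hSe] at h9
    exact h9
  have hS'eq : Φ (M⁻¹ • e) - star (Φ (M⁻¹ • e)) = M⁻¹ • (Φ e - star (Φ e)) :=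
    aux_abba hscale
  have hMS' : M • (Φ (M⁻¹ • e) - star (Φ (M⁻¹ • e))) = Φ e - star (Φ e) := by
    rw [hS'eq, hMinv]
  -- ### skew part of Z equals S
  have hZskew : (starJordan c (M⁻¹ • e) + M • Φ (M⁻¹ • e))
      - star (starJordan c (M⁻¹ • e) + M • Φ (M⁻¹ • e)) = Φ e - star (Φ e) := by
    rw [star_add, hsym c _ hx0star, hstarM]
    calc (starJordan c (M⁻¹ • e) + M • Φ (M⁻¹ • e))
          - (starJordan c (M⁻¹ • e) + M • star (Φ (M⁻¹ • e)))
        = M • Φ (M⁻¹ • e) - M • star (Φ (M⁻¹ • e)) := by abel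
      _ = M • (Φ (M⁻¹ • e) - star (Φ (M⁻¹ • e))) := by rw [smul_sub]
      _ = Φ e - star (Φ e) := hMS'
  -- ### the key relation  N * b = 0
  have hNb : ∀ b : A, aux_is12 e b →
      aux_p11 e (starJordan c (M⁻¹ • e) + M • Φ (M⁻¹ • e)) * b = 0 := by
    intro b hb
    have hN11 := aux_m11 halt₁ halt₂ he (starJordan c (M⁻¹ • e) + M • Φ (M⁻¹ • e))
    have hB12 := aux_m12 halt₁ halt₂ he (starJordan c (M⁻¹ • e) + M • Φ (M⁻¹ • e))
    have hC21 := aux_m21 halt₁ halt₂ he (starJordan c (M⁻¹ • e) + M • Φ (M⁻¹ • e))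
    have hsjeb : starJordan e b = b := by rw [sj_eq, hestar, hb.1, hb.2, add_zero]
    have h := hGM e b
    rw [hsjeb] at h
    have h12 := congrArg (aux_p12 e) h
    rw [sj_eq e (Φ b), hestar, aux_p12_add, aux_p12_add, aux_p12_el halt₁ he,
      aux_p12_er halt₁ halt₂ he, add_zero] at h12
    have h13 : aux_p12 e (starJordan
        (starJordan c (M⁻¹ • e) + M • Φ (M⁻¹ • e)) b) = 0 := by
      have h14 : aux_p12 e (starJordan
            (starJordan c (M⁻¹ • e) + M • Φ (M⁻¹ • e)) b) + aux_p12 e (Φ b)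
          = 0 + aux_p12 e (Φ b) := by
        rw [zero_add]; exact h12.symm
      exact add_right_cancel h14
    have hZdec : (starJordan c (M⁻¹ • e) + M • Φ (M⁻¹ • e))
        = aux_p11 e (starJordan c (M⁻¹ • e) + M • Φ (M⁻¹ • e))
          + aux_p12 e (starJordan c (M⁻¹ • e) + M • Φ (M⁻¹ • e))
          + aux_p21 e (starJordan c (M⁻¹ • e) + M • Φ (M⁻¹ • e)) := by
      have hd := aux_decomp (e := e) (starJordan c (M⁻¹ • e) + M • Φ (M⁻¹ • e))
      rw [hp22Z, add_zero] at hd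
      exact hd.symm
    have h15 := aux_sj_split (b := b) hZdec
    have e1 : aux_p12 e (aux_p11 e (starJordan c (M⁻¹ • e) + M • Φ (M⁻¹ • e)) * b)
        = aux_p11 e (starJordan c (M⁻¹ • e) + M • Φ (M⁻¹ • e)) * b :=
      aux_p12_of12 (aux_T11_12 halt₁ halt₂ hN11 hb)
    have e2 : aux_p12 e (aux_p12 e (starJordan c (M⁻¹ • e) + M • Φ (M⁻¹ • e)) * b)
        = 0 := aux_p12_of21 (aux_T12_12 halt₁ halt₂ hB12 hb)
    have e3 : aux_p12 e (aux_p21 e (starJordan c (M⁻¹ • e) + M • Φ (M⁻¹ • e)) * b)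
        = 0 := aux_p12_of22 (aux_T21_12 halt₁ halt₂ hC21 hb)
    have e4 : b * star (aux_p11 e (starJordan c (M⁻¹ • e) + M • Φ (M⁻¹ • e))) = 0 :=
      aux_T12_11 halt₁ halt₂ he hb (aux_star11 hestar hN11)
    have e5 : aux_p12 e (b * star (aux_p12 e (starJordan c (M⁻¹ • e) + M • Φ (M⁻¹ • e))))
        = 0 := aux_p12_of11 (aux_T12_21 halt₁ halt₂ hb (aux_star12 hestar hB12))
    have e6 : aux_p12 e (b * star (aux_p21 e (starJordan c (M⁻¹ • e) + M • Φ (M⁻¹ • e))))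
        = 0 := aux_p12_of21 (aux_T12_12 halt₁ halt₂ hb (aux_star21 hestar hC21))
    have h16 : aux_p12 e (starJordan (starJordan c (M⁻¹ • e) + M • Φ (M⁻¹ • e)) b)
        = aux_p11 e (starJordan c (M⁻¹ • e) + M • Φ (M⁻¹ • e)) * b := by
      rw [h15, aux_p12_add6, e1, e2, e3, e4, aux_p12_zero, e5, e6]
      simp
    rw [h16] at h13
    exact h13
  -- ### faithfulness kills N
  have hN0 : aux_p11 e (starJordan c (M⁻¹ • e) + M • Φ (M⁻¹ • e)) = 0 := by
    apply hfaith
    intro r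
    have hN11 := aux_m11 halt₁ halt₂ he (starJordan c (M⁻¹ • e) + M • Φ (M⁻¹ • e))
    have hr := aux_decomp (e := e) r
    have h20 : aux_p11 e (starJordan c (M⁻¹ • e) + M • Φ (M⁻¹ • e)) * r
        = aux_p11 e (starJordan c (M⁻¹ • e) + M • Φ (M⁻¹ • e)) * aux_p11 e r := by
      calc aux_p11 e (starJordan c (M⁻¹ • e) + M • Φ (M⁻¹ • e)) * r
          = aux_p11 e (starJordan c (M⁻¹ • e) + M • Φ (M⁻¹ • e))
            * (aux_p11 e r + aux_p12 e r + aux_p21 e r + aux_p22 e r) := by rw [hr]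
        _ = _ := by
          rw [mul_add, mul_add, mul_add]
          rw [hNb _ (aux_m12 halt₁ halt₂ he r)]
          rw [aux_T11_right0 halt₁ halt₂ he hN11 (aux_m21 halt₁ halt₂ he r).1]
          rw [aux_T11_right0 halt₁ halt₂ he hN11 (aux_m22 halt₁ halt₂ he r).1]
          rw [add_zero, add_zero, add_zero]
    rw [h20]
    have h16 := aux_T11_11 halt₁ halt₂ hN11 (aux_m11 halt₁ halt₂ he r)
    rw [hfdef, mul_sub, mul_one, h16.2, sub_self]
  -- ### conclusion
  have hfinal : Φ e - star (Φ e) = 0 := by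
    have h17 : Φ e - star (Φ e) = e * (Φ e - star (Φ e)) * e := by
      rw [heS, hSe]
    rw [h17, ← hZskew]
    have h18 : e * ((starJordan c (M⁻¹ • e) + M • Φ (M⁻¹ • e))
          - star (starJordan c (M⁻¹ • e) + M • Φ (M⁻¹ • e))) * e
        = aux_p11 e (starJordan c (M⁻¹ • e) + M • Φ (M⁻¹ • e))
          - aux_p11 e (star (starJordan c (M⁻¹ • e) + M • Φ (M⁻¹ • e))) := by
      unfold aux_p11
      rw [mul_sub, sub_mul]
    rw [h18, ← aux_p11_star halt₁ halt₂ hestar, hN0, star_zero, sub_self]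
  exact (sub_eq_zero.mp hfinal).symm

end Main

theorem stmt_11 {A : Type*} [NonAssocRing A] [Module ℂ A]
    [SMulCommClass ℂ A A] [IsScalarTower ℂ A A] [StarRing A]
    (halt₁ : ∀ a b : A, a * a * b = a * (a * b))
    (halt₂ : ∀ a b : A, b * a * a = b * (a * a))
    (e : A) (heStar : star e = e) (heIdem : e * e = e) (he0 : e ≠ 0) (he1 : e ≠ 1)
    (hsp : ∀ x : A, (∀ r : A, x * r * e = 0) → x = 0)
    (hcl : ∀ x : A, (∀ r : A, x * r * (1 - e) = 0) → x = 0)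
    (n : ℕ) (hn : 2 ≤ n) (Φ : A → A)
    (hΦ : ∀ x y : A,
      Φ (leftStarJordan (List.ofFn (lastTwoFamily n x y))) =
        ∑ k : Fin n, leftStarJordan (List.ofFn
          (Function.update (lastTwoFamily n x y) k (Φ (lastTwoFamily n x y k))))) :
    star (Φ e) = Φ e ∧ star (Φ (1 - e)) = Φ (1 - e) := by
  obtain ⟨p, rfl⟩ : ∃ p, n = p + 2 := ⟨n - 2, by omega⟩
  obtain ⟨c, hID⟩ := aux_hID p Φ hΦ
  have hM0 : ((2 ^ p : ℕ) : ℂ) ≠ 0 := by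
    exact_mod_cast pow_ne_zero p (two_ne_zero)
  have hstarM : ∀ z : A, star (((2 ^ p : ℕ) : ℂ) • z) = ((2 ^ p : ℕ) : ℂ) • star z := by
    intro z
    rw [Nat.cast_smul_eq_nsmul, Nat.cast_smul_eq_nsmul, star_nsmul]
  have hIDC : ∀ x y : A, Φ (((2 ^ p : ℕ) : ℂ) • starJordan x y)
      = starJordan (starJordan c x) y + ((2 ^ p : ℕ) : ℂ) • starJordan (Φ x) y
        + ((2 ^ p : ℕ) : ℂ) • starJordan x (Φ y) := by
    intro x y
    rw [Nat.cast_smul_eq_nsmul, Nat.cast_smul_eq_nsmul, Nat.cast_smul_eq_nsmul]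
    exact hID x y
  constructor
  · exact aux_main halt₁ halt₂ e heStar heIdem hcl Φ _ hM0 hstarM c hIDC
  · have h1es : star ((1 : A) - e) = 1 - e := by rw [star_sub, star_one, heStar]
    have h1ei : ((1 : A) - e) * (1 - e) = 1 - e := by
      rw [sub_mul, one_mul, mul_sub, mul_one, heIdem, sub_self, sub_zero]
    have hfaith' : ∀ x : A, (∀ r : A, x * r * (1 - (1 - e)) = 0) → x = 0 := by
      intro x hx
      apply hsp
      intro r
      have h := hx r
      rwa [sub_sub_cancel] at h
    exact aux_main halt₁ halt₂ (1 - e) h1es h1ei hfaith' Φ _ hM0 hstarM c hIDC
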